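/- Let k be a finite field with c elements and characteristic p, let d be a positive integer, and let q be a prime number coprime to both p and d. Then Irr_k(dq) ≥ Irr_k(q), i.e. the number of monic irreducible polynomials of degree dq in k[X] is at least the number of monic irreducible polynomials of degree q in k[X]. -/

import Mathlib

open Polynomial IntermediateField

namespace Stmt2Aux

variable {k : Type*} [Field k] [Fintype k]

theorem Lsplit {M : Type*} [Monoid M] (x : M) (c a b : ℕ) :
    x ^ c ^ (a + b) = (x ^ c ^ a) ^ c ^ b := by
  rw [pow_add, pow_mul]

theorem L2 {M : Type*} [Monoid M] (x : M) (c j : ℕ) (hj : x ^ c ^ j = x) (t : ℕ) :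
    x ^ c ^ (j * t) = x := by
  induction t with
  | zero => simp
  | succ t ih => rw [mul_add, mul_one, Lsplit, ih, hj]

theorem L3 (a : k) (j : ℕ) : a ^ (Fintype.card k) ^ j = a := by
  induction j with
  | zero => simp
  | succ j ih => rw [pow_succ, pow_mul, ih, FiniteField.pow_card]

theorem A1 (α : AlgebraicClosure k) :
    α ^ (Fintype.card k ^ (minpoly k α).natDegree) = α := by
  have hint : IsIntegral k α := Algebra.IsIntegral.isIntegral α
  have hfd : FiniteDimensional k k⟮α⟯ := IntermediateField.adjoin.finiteDimensional hint
  have hfin : Finite k⟮α⟯ := Module.finite_of_finite k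
  have : Fintype k⟮α⟯ := Fintype.ofFinite _
  have hcard : Fintype.card k⟮α⟯ = Fintype.card k ^ (minpoly k α).natDegree := by
    rw [Module.card_eq_pow_finrank (K := k) (V := k⟮α⟯), IntermediateField.adjoin.finrank hint]
  have h := FiniteField.pow_card (IntermediateField.AdjoinSimple.gen k α)
  rw [hcard] at h
  have := congrArg (algebraMap k⟮α⟯ (AlgebraicClosure k)) h
  simpa using this

theorem L4 (α : AlgebraicClosure k) (j : ℕ) (hj : α ^ (Fintype.card k) ^ j = α)
    (x : AlgebraicClosure k) (hx : x ∈ k⟮α⟯) : x ^ (Fintype.card k) ^ j = x := by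
  set K := AlgebraicClosure k
  obtain ⟨f, hp, hc⟩ := FiniteField.card k (ringChar k)
  haveI : CharP K (ringChar k) :=
    charP_of_injective_algebraMap (algebraMap k K).injective (ringChar k)
  haveI : Fact (ringChar k).Prime := ⟨hp⟩
  have hcj : (Fintype.card k) ^ j = (ringChar k) ^ ((f : ℕ) * j) := by
    rw [hc, ← pow_mul]
  induction hx using IntermediateField.adjoin_induction with
  | mem x hx => rw [Set.mem_singleton_iff] at hx; rw [hx]; exact hj
  | algebraMap a => rw [← map_pow, L3]
  | add x y hx hy ihx ihy =>
      rw [hcj] at ihx ihy ⊢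
      rw [add_pow_char_pow, ihx, ihy]
  | inv x hx ihx => rw [inv_pow, ihx]
  | mul x y hx hy ihx ihy => rw [mul_pow, ihx, ihy]

variable (k) in
def Em (m : ℕ) : Set (AlgebraicClosure k) := {x | x ^ (Fintype.card k) ^ m = x}

theorem natDegree_P (m : ℕ) (hm : 0 < m) :
    (X ^ (Fintype.card k) ^ m - X : k[X]).natDegree = (Fintype.card k) ^ m := by
  have hc2 : 1 < (Fintype.card k) ^ m :=
    Nat.one_lt_pow hm.ne' Fintype.one_lt_card
  compute_degree!
  · rw [if_neg (by omega)]; simp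
  · omega

theorem P_ne_zero (m : ℕ) (hm : 0 < m) :
    (X ^ (Fintype.card k) ^ m - X : k[X]) ≠ 0 := by
  intro h
  have := natDegree_P (k := k) m hm
  rw [h, natDegree_zero] at this
  have hc2 : 1 < (Fintype.card k) ^ m := Nat.one_lt_pow hm.ne' Fintype.one_lt_card
  omega

theorem Em_eq_rootSet (m : ℕ) (hm : 0 < m) :
    Em k m = (X ^ (Fintype.card k) ^ m - X : k[X]).rootSet (AlgebraicClosure k) := by
  ext x
  simp only [Em, Set.mem_setOf_eq, mem_rootSet, map_sub, map_pow, aeval_X, sub_eq_zero,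
    P_ne_zero m hm, ne_eq, not_false_iff, true_and]

theorem Em_finite (m : ℕ) (hm : 0 < m) : (Em k m).Finite := by
  rw [Em_eq_rootSet m hm]; exact Polynomial.rootSet_finite _ _

theorem Em_ncard (m : ℕ) (hm : 0 < m) : (Em k m).ncard = (Fintype.card k) ^ m := by
  obtain ⟨f, hp, hc⟩ := FiniteField.card k (ringChar k)
  have hsep : (X ^ (Fintype.card k) ^ m - X : k[X]).Separable := by
    apply galois_poly_separable (ringChar k)
    rw [hc, ← pow_mul]
    exact dvd_pow_self _ (by positivity)
  have hcard := card_rootSet_eq_natDegree (K := AlgebraicClosure k) hsep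
    (IsAlgClosed.splits _)
  rw [natDegree_P m hm] at hcard
  rw [Em_eq_rootSet m hm, ← Nat.card_coe_set_eq, Nat.card_eq_fintype_card, hcard]

theorem L5 (α : AlgebraicClosure k) (j : ℕ) (hj : 0 < j) (h : α ^ (Fintype.card k) ^ j = α) :
    (minpoly k α).natDegree ≤ j := by
  have hint : IsIntegral k α := Algebra.IsIntegral.isIntegral α
  have hfd : FiniteDimensional k k⟮α⟯ := IntermediateField.adjoin.finiteDimensional hint
  have hfin : Finite k⟮α⟯ := Module.finite_of_finite k
  have : Fintype k⟮α⟯ := Fintype.ofFinite _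
  have hcard : ((k⟮α⟯ : IntermediateField k (AlgebraicClosure k)) : Set (AlgebraicClosure k)).ncard
      = Fintype.card k ^ (minpoly k α).natDegree := by
    rw [← Nat.card_coe_set_eq]
    rw [SetLike.coe_sort_coe, Nat.card_eq_fintype_card,
      Module.card_eq_pow_finrank (K := k) (V := k⟮α⟯), IntermediateField.adjoin.finrank hint]
  have hsub : ((k⟮α⟯ : IntermediateField k (AlgebraicClosure k)) : Set (AlgebraicClosure k))
      ⊆ Em k j := fun x hx => L4 α j h x hx
  have hle := Set.ncard_le_ncard hsub (Em_finite j hj)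
  rw [hcard, Em_ncard j hj] at hle
  exact (Nat.pow_le_pow_iff_right Fintype.one_lt_card).mp hle

theorem L6 (α : AlgebraicClosure k) (m : ℕ) :
    α ^ (Fintype.card k) ^ m = α ↔ (minpoly k α).natDegree ∣ m := by
  have hint : IsIntegral k α := Algebra.IsIntegral.isIntegral α
  have hn : 0 < (minpoly k α).natDegree := minpoly.natDegree_pos hint
  set n := (minpoly k α).natDegree with hndef
  constructor
  · intro hm
    have hdiv : α ^ (Fintype.card k) ^ (n * (m / n)) = α := L2 α _ n (A1 α) _
    have hr : α ^ (Fintype.card k) ^ (m % n) = α := by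
      have hmod := Nat.div_add_mod m n
      calc α ^ (Fintype.card k) ^ (m % n)
          = (α ^ (Fintype.card k) ^ (n * (m / n))) ^ (Fintype.card k) ^ (m % n) := by rw [hdiv]
        _ = α ^ (Fintype.card k) ^ (n * (m / n) + m % n) := (Lsplit α _ _ _).symm
        _ = α := by rw [hmod]; exact hm
    rcases Nat.eq_zero_or_pos (m % n) with h0 | hpos
    · exact Nat.dvd_of_mod_eq_zero h0
    · exact absurd (L5 α _ hpos hr) (not_le.mpr (Nat.mod_lt m hn))
  · rintro ⟨t, rfl⟩
    exact L2 α _ n (A1 α) t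

theorem Sm_finite (m : ℕ) :
    {f : k[X] | f.Monic ∧ Irreducible f ∧ f.natDegree = m}.Finite := by
  set S := {f : k[X] | f.Monic ∧ Irreducible f ∧ f.natDegree = m}
  apply Set.Finite.of_finite_image (f := fun f : k[X] => fun i : Fin (m + 1) => f.coeff i)
  · exact Set.toFinite _
  · intro f hf g hg hfg
    ext i
    rcases le_or_gt i m with hi | hi
    · exact congrFun hfg ⟨i, Nat.lt_succ_of_le hi⟩
    · rw [coeff_eq_zero_of_natDegree_lt (hf.2.2 ▸ hi),
        coeff_eq_zero_of_natDegree_lt (hg.2.2 ▸ hi)]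

theorem L9 (m : ℕ) (hm : 0 < m) :
    {f : k[X] | f.Monic ∧ Irreducible f ∧ f.natDegree = m}.ncard * m
      = {α : AlgebraicClosure k | (minpoly k α).natDegree = m}.ncard := by
  classical
  set K := AlgebraicClosure k
  set S := {f : k[X] | f.Monic ∧ Irreducible f ∧ f.natDegree = m} with hSdef
  have hS : S.Finite := Sm_finite m
  set T : Finset K := hS.toFinset.biUnion (fun f => (f.rootSet K).toFinset) with hTdef
  have hmin : ∀ f ∈ S, ∀ α ∈ f.rootSet K, minpoly k α = f := by
    intro f hf α hα
    exact (minpoly.eq_of_irreducible_of_monic hf.2.1 ((mem_rootSet.mp hα).2) hf.1).symm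
  have hDT : {α : K | (minpoly k α).natDegree = m} = ↑T := by
    ext α
    simp only [hTdef, Finset.coe_biUnion, Set.mem_iUnion, Finset.mem_coe,
      Set.Finite.mem_toFinset, Set.mem_toFinset, Set.mem_setOf_eq]
    constructor
    · intro hα
      have hint : IsIntegral k α := Algebra.IsIntegral.isIntegral α
      refine ⟨minpoly k α, ⟨minpoly.monic hint, minpoly.irreducible hint, hα⟩, ?_⟩
      rw [mem_rootSet]
      exact ⟨minpoly.ne_zero hint, minpoly.aeval k α⟩
    · rintro ⟨f, hf, hα⟩
      rw [hmin f hf α hα, hf.2.2]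
  have hcardroot : ∀ f ∈ hS.toFinset, ((f.rootSet K).toFinset).card = m := by
    intro f hf
    rw [Set.Finite.mem_toFinset] at hf
    have hsep : f.Separable := PerfectField.separable_of_irreducible hf.2.1
    rw [Set.toFinset_card, card_rootSet_eq_natDegree hsep (IsAlgClosed.splits _), hf.2.2]
  have hdisj : ∀ f ∈ hS.toFinset, ∀ g ∈ hS.toFinset, f ≠ g →
      Disjoint ((f.rootSet K).toFinset) ((g.rootSet K).toFinset) := by
    intro f hf g hg hfg
    rw [Set.Finite.mem_toFinset] at hf hg
    rw [Finset.disjoint_left]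
    intro α hαf hαg
    rw [Set.mem_toFinset] at hαf hαg
    exact hfg ((hmin f hf α hαf).symm.trans (hmin g hg α hαg))
  have hTcard : T.card = hS.toFinset.card * m := by
    rw [hTdef, Finset.card_biUnion hdisj, Finset.sum_congr rfl hcardroot,
      Finset.sum_const, smul_eq_mul]
  rw [hDT, Set.ncard_coe_finset, hTcard, Set.ncard_eq_toFinset_card S hS]

theorem mem_Em_iff (α : AlgebraicClosure k) (m : ℕ) :
    α ∈ Em k m ↔ (minpoly k α).natDegree ∣ m := L6 α m

theorem L10 (q : ℕ) (hq : q.Prime) :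
    {α : AlgebraicClosure k | (minpoly k α).natDegree = q}.ncard
      = (Fintype.card k) ^ q - Fintype.card k := by
  have hq1 : 0 < q := hq.pos
  have hsub : Em k 1 ⊆ Em k q := by
    intro x hx
    have := L2 x (Fintype.card k) 1 hx q
    rwa [one_mul] at this
  have hD : {α : AlgebraicClosure k | (minpoly k α).natDegree = q} = Em k q \ Em k 1 := by
    ext α
    simp only [Set.mem_setOf_eq, Set.mem_diff, mem_Em_iff]
    constructor
    · rintro rfl
      exact ⟨dvd_rfl, fun h => hq.one_lt.ne' (Nat.dvd_one.mp h)⟩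
    · rintro ⟨h1, h2⟩
      rcases (Nat.Prime.eq_one_or_self_of_dvd hq _ h1) with h | h
      · exact absurd (h ▸ dvd_rfl) h2
      · exact h
  rw [hD, Set.ncard_diff hsub (Em_finite 1 one_pos), Em_ncard q hq1, Em_ncard 1 one_pos, pow_one]

theorem L11 (m : ℕ) (hm : 0 < m) :
    (Fintype.card k) ^ m ≤
      {α : AlgebraicClosure k | (minpoly k α).natDegree = m}.ncard
        + ∑ ℓ ∈ m.primeFactors, (Fintype.card k) ^ (m / ℓ) := by
  classical
  set K := AlgebraicClosure k
  set D := {α : K | (minpoly k α).natDegree = m} with hDdef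
  set U : Finset K := m.primeFactors.biUnion
    (fun ℓ => ((X ^ (Fintype.card k) ^ (m / ℓ) - X : k[X]).rootSet K).toFinset) with hUdef
  have hUEm : ∀ ℓ ∈ m.primeFactors, ∀ x : K,
      x ∈ ((X ^ (Fintype.card k) ^ (m / ℓ) - X : k[X]).rootSet K).toFinset ↔ x ∈ Em k (m / ℓ) := by
    intro ℓ hℓ x
    have hpos : 0 < m / ℓ :=
      Nat.div_pos (Nat.le_of_dvd hm (Nat.dvd_of_mem_primeFactors hℓ))
        (Nat.prime_of_mem_primeFactors hℓ).pos
    rw [Set.mem_toFinset, ← Em_eq_rootSet _ hpos]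
  have hsub : Em k m \ ↑U ⊆ D := by
    intro α ⟨hαm, hαU⟩
    have hdvd : (minpoly k α).natDegree ∣ m := (mem_Em_iff α m).mp hαm
    by_contra hne
    -- natDegree is a proper divisor of m
    have hlt : (minpoly k α).natDegree ≠ m := hne
    -- pick a prime ℓ dividing m / natDegree
    set n := (minpoly k α).natDegree with hn
    have hn0 : 0 < n := minpoly.natDegree_pos (Algebra.IsIntegral.isIntegral α)
    have hq : m / n ≠ 1 := by
      intro h1
      exact hlt (by rw [← Nat.div_mul_cancel hdvd, h1, one_mul])
    have hmn0 : 0 < m / n := Nat.div_pos (Nat.le_of_dvd hm hdvd) hn0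
    obtain ⟨ℓ, hℓp, hℓdvd⟩ := Nat.exists_prime_and_dvd hq
    have hℓm : ℓ ∈ m.primeFactors := by
      rw [Nat.mem_primeFactors]
      exact ⟨hℓp, hℓdvd.trans (Nat.div_dvd_of_dvd hdvd), hm.ne'⟩
    have hndvd : n ∣ m / ℓ := by
      have hℓm' : ℓ ∣ m := hℓdvd.trans (Nat.div_dvd_of_dvd hdvd)
      rw [Nat.dvd_div_iff_mul_dvd hℓm']
      -- n * ℓ ∣ m
      obtain ⟨t, ht⟩ := hℓdvd
      have : m = n * (ℓ * t) := by
        rw [← Nat.div_mul_cancel hdvd, ht]; ring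
      exact ⟨t, by rw [this]; ring⟩
    apply hαU
    rw [hUdef, Finset.mem_coe, Finset.mem_biUnion]
    exact ⟨ℓ, hℓm, (hUEm ℓ hℓm α).mpr ((mem_Em_iff α (m / ℓ)).mpr hndvd)⟩
  have hDfin : D.Finite := by
    apply Set.Finite.subset (Em_finite m hm)
    intro α hα
    exact (mem_Em_iff α m).mpr (hα ▸ dvd_rfl)
  have hUcard : (U.card : ℕ) ≤ ∑ ℓ ∈ m.primeFactors, (Fintype.card k) ^ (m / ℓ) := by
    refine le_trans (Finset.card_biUnion_le) (Finset.sum_le_sum ?_)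
    intro ℓ hℓ
    have hpos : 0 < m / ℓ :=
      Nat.div_pos (Nat.le_of_dvd hm (Nat.dvd_of_mem_primeFactors hℓ))
        (Nat.prime_of_mem_primeFactors hℓ).pos
    have : ((X ^ (Fintype.card k) ^ (m / ℓ) - X : k[X]).rootSet K).toFinset = (Em_finite (k := k) (m / ℓ) hpos).toFinset := by
      ext x
      rw [hUEm ℓ hℓ x, Set.Finite.mem_toFinset]
    rw [this, ← Set.ncard_eq_toFinset_card _ (Em_finite _ hpos), Em_ncard _ hpos]
  have hEmsub : Em k m ⊆ (Em k m \ ↑U) ∪ ↑U := by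
    intro x hx
    by_cases hxU : x ∈ (U : Set K)
    · exact Or.inr hxU
    · exact Or.inl ⟨hx, hxU⟩
  have h1 : (Em k m).ncard ≤ (Em k m \ ↑U).ncard + (U.card) := by
    refine le_trans (Set.ncard_le_ncard hEmsub ?_) ?_
    · exact Set.Finite.union (Set.Finite.diff (Em_finite m hm)) (Finset.finite_toSet U)
    · exact le_trans (Set.ncard_union_le _ _) (by rw [Set.ncard_coe_finset])
  have h2 : (Em k m \ ↑U).ncard ≤ D.ncard := Set.ncard_le_ncard hsub hDfin
  rw [← Em_ncard m hm]
  omega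


theorem sq_le_two_pow {m : ℕ} (hm : 4 ≤ m) : m * m ≤ 2 ^ m := by
  induction m with
  | zero => omega
  | succ m ih =>
    rcases Nat.lt_or_ge m 4 with h | h
    · interval_cases m <;> omega
    · have := ih h
      have h2 : (m + 1) * (m + 1) ≤ 2 * (m * m) := by nlinarith
      calc (m + 1) * (m + 1) ≤ 2 * (m * m) := h2
        _ ≤ 2 * 2 ^ m := by omega
        _ = 2 ^ (m + 1) := by ring

theorem two_mul_le_two_pow (L : ℕ) : 2 * L ≤ 2 ^ L := by
  induction L with
  | zero => simp
  | succ L ih =>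
    rcases Nat.eq_zero_or_pos L with rfl | hL
    · simp
    · have h2 : 1 < 2 ^ L := Nat.one_lt_two_pow_iff.mpr hL.ne'
      calc 2 * (L + 1) = 2 * L + 2 := by ring
        _ ≤ 2 ^ L + 2 ^ L := by omega
        _ = 2 ^ (L + 1) := by ring

theorem le_two_pow_half {m : ℕ} (hm : 4 ≤ m) : m ≤ 2 ^ (m - m / 2) := by
  have h1 : m * m ≤ 2 ^ m := sq_le_two_pow hm
  have h2 : 2 ^ m ≤ 2 ^ (m - m / 2) * 2 ^ (m - m / 2) := by
    rw [← pow_add]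
    exact Nat.pow_le_pow_right (by norm_num) (by omega)
  have h3 : m * m ≤ 2 ^ (m - m / 2) * 2 ^ (m - m / 2) := le_trans h1 h2
  by_contra h
  push_neg at h
  have := Nat.mul_lt_mul'' h h
  omega

-- main numeric inequality
theorem numeric (c d q : ℕ) (hc : 2 ≤ c) (hd : 2 ≤ d) (hq : 2 ≤ q) :
    d * (c ^ q - c) + ∑ ℓ ∈ (d * q).primeFactors, c ^ (d * q / ℓ) ≤ c ^ (d * q) := by
  set m := d * q with hmdef
  have hm4 : 4 ≤ m := le_trans (by norm_num) (Nat.mul_le_mul hd hq)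
  have hm0 : 0 < m := by omega
  set L := m.primeFactors.card with hL
  -- each summand ≤ c ^ (m / 2)
  have hterm : ∀ ℓ ∈ m.primeFactors, c ^ (m / ℓ) ≤ c ^ (m / 2) := by
    intro ℓ hℓ
    exact Nat.pow_le_pow_right (by omega)
      (Nat.div_le_div_left (Nat.prime_of_mem_primeFactors hℓ).two_le two_pos)
  have hsum : ∑ ℓ ∈ m.primeFactors, c ^ (m / ℓ) ≤ L * c ^ (m / 2) := by
    calc ∑ ℓ ∈ m.primeFactors, c ^ (m / ℓ) ≤ ∑ _ℓ ∈ m.primeFactors, c ^ (m / 2) :=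
          Finset.sum_le_sum hterm
      _ = L * c ^ (m / 2) := by rw [Finset.sum_const, smul_eq_mul]
  -- d * (c^q - c) ≤ d * c^(m/2)
  have hq2 : q ≤ m / 2 := Nat.le_div_iff_mul_le two_pos |>.mpr (by rw [hmdef]; nlinarith)
  have hdq : d * (c ^ q - c) ≤ d * c ^ (m / 2) :=
    Nat.mul_le_mul_left d (le_trans (Nat.sub_le _ _) (Nat.pow_le_pow_right (by omega) hq2))
  -- L + d ≤ m
  have h2L : 2 ^ L ≤ m := by
    have h1 : (2 : ℕ) ^ L ≤ ∏ ℓ ∈ m.primeFactors, ℓ :=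
      Finset.pow_card_le_prod _ _ _ (fun ℓ hℓ => (Nat.prime_of_mem_primeFactors hℓ).two_le)
    exact le_trans h1 (Nat.le_of_dvd hm0 (Nat.prod_primeFactors_dvd m))
  have hLm : L ≤ m / 2 := Nat.le_div_iff_mul_le two_pos |>.mpr
    (by have := two_mul_le_two_pow L; omega)
  have hdm : d ≤ m / 2 := Nat.le_div_iff_mul_le two_pos |>.mpr (by rw [hmdef]; nlinarith)
  have hLd : L + d ≤ m := by omega
  -- m ≤ c ^ (m - m/2)
  have hmc : m ≤ c ^ (m - m / 2) :=
    le_trans (le_two_pow_half hm4) (Nat.pow_le_pow_left hc _)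
  calc d * (c ^ q - c) + ∑ ℓ ∈ m.primeFactors, c ^ (m / ℓ)
      ≤ d * c ^ (m / 2) + L * c ^ (m / 2) := by omega
    _ = (L + d) * c ^ (m / 2) := by ring
    _ ≤ c ^ (m - m / 2) * c ^ (m / 2) := Nat.mul_le_mul_right _ (le_trans hLd hmc)
    _ = c ^ m := by rw [← pow_add]; congr 1; omega

end Stmt2Aux

open Stmt2Aux in
/-- Lemma 3.3(3): for a finite field `k` with `c` elements and characteristic `p`,
a positive integer `d`, and a prime `q` coprime to `p` and `d`, the number of monic
irreducible polynomials of degree `d * q` in `k[X]` is at least the number of monic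
irreducible polynomials of degree `q`. -/
theorem stmt_2 (k : Type*) [Field k] [Fintype k] (c p d q : ℕ)
    (hc : Fintype.card k = c) [CharP k p] (hd : 0 < d) (hq : q.Prime)
    (hqp : Nat.Coprime q p) (hqd : Nat.Coprime q d) :
    {f : Polynomial k | f.Monic ∧ Irreducible f ∧ f.natDegree = q}.ncard ≤
      {f : Polynomial k | f.Monic ∧ Irreducible f ∧ f.natDegree = d * q}.ncard := by
  subst hc
  rcases eq_or_lt_of_le (Nat.succ_le_of_lt hd) with h1 | hd2
  · rw [show d = 1 from h1.symm, one_mul]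
  · -- d ≥ 2
    have hd2 : 2 ≤ d := hd2
    have hq2 : 2 ≤ q := hq.two_le
    have hc2 : 2 ≤ Fintype.card k := Fintype.one_lt_card
    have hm0 : 0 < d * q := by positivity
    have h1 := L9 (k := k) q hq.pos
    have h2 := L9 (k := k) (d * q) hm0
    have h3 := L10 (k := k) q hq
    have h4 := L11 (k := k) (d * q) hm0
    have h5 := numeric (Fintype.card k) d q hc2 hd2 hq2
    set A := {f : Polynomial k | f.Monic ∧ Irreducible f ∧ f.natDegree = q}.ncard
    set B := {f : Polynomial k | f.Monic ∧ Irreducible f ∧ f.natDegree = d * q}.ncard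
    have e1 : A * q = Fintype.card k ^ q - Fintype.card k := h1.trans h3
    have e3 : d * (Fintype.card k ^ q - Fintype.card k) ≤ B * (d * q) := by omega
    have e4 : A * (d * q) ≤ B * (d * q) := by
      calc A * (d * q) = d * (A * q) := by ring
        _ = d * (Fintype.card k ^ q - Fintype.card k) := by rw [e1]
        _ ≤ B * (d * q) := e3
    exact Nat.le_of_mul_le_mul_right e4 hm0
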